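/- For every seed set S ⊆ V, the linear program min { Σ_{i ∈ V \ S} π_i : π : V → [0,1], π_i = 1 for all i ∈ S, π_i − π_j ≤ 1 − p(i, j) for every edge (i, j) ∈ E } has a unique optimal solution on V \ S, and it is given by π_i = π*_i = max(0, max_{γ ∈ Γ(S, i)} L(γ)) for every i ∈ V \ S; in particular every feasible π satisfies π_i ≥ π*_i for all i ∈ V \ S. -/

import Mathlib

open scoped BigOperators

namespace CorrIM

variable {V : Type*} [Fintype V] [DecidableEq V]

/-- A node `i` is influenced: `i ∈ S`, or `i` is reachable from some node of `S`
along the live edges of the scenario `c`. -/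
def influenced (c : Finset (V × V)) (S : Finset V) (i : V) : Prop :=
  ∃ s ∈ S, Relation.ReflTransGen (fun a b : V => (a, b) ∈ c) s i

/-- `R c S` : the number of influenced nodes in scenario `c` with seed set `S`. -/
noncomputable def R (c : Finset (V × V)) (S : Finset V) : ℕ :=
  Set.ncard {i : V | influenced c S i}

/-- The Fréchet class `Θ` : probability distributions on scenarios (subsets of `E`)
whose marginals agree with the edge likelihoods `p`. -/
def memTheta (E : Finset (V × V)) (p : V × V → ℝ) (θ : Finset (V × V) → ℝ) : Prop :=
  (∀ c, 0 ≤ θ c) ∧ (∀ c, θ c ≠ 0 → c ⊆ E) ∧ (∑ c : Finset (V × V), θ c) = 1 ∧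
    ∀ e ∈ E, (∑ c : Finset (V × V), if e ∈ c then θ c else 0) = p e

/-- Expected number of influenced nodes under the distribution `θ`. -/
noncomputable def expInf (θ : Finset (V × V) → ℝ) (S : Finset V) : ℝ :=
  ∑ c : Finset (V × V), θ c * (R c S : ℝ)

/-- The correlation robust influence function `f^corr`. -/
noncomputable def fcorr (E : Finset (V × V)) (p : V × V → ℝ) (S : Finset V) : ℝ :=
  sInf {x : ℝ | ∃ θ, memTheta E p θ ∧ x = expInf θ S}

open Classical in
/-- Probability of the event `A` under the distribution `θ`. -/
noncomputable def prob (θ : Finset (V × V) → ℝ) (A : Finset (V × V) → Prop) : ℝ :=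
  ∑ c : Finset (V × V), if A c then θ c else 0

/-- `γ` (a list of nodes `i₀, i₁, …, i_λ`, `λ ≥ 1`) is a directed path from the
seed set `S` to the node `i` using edges of `E`. -/
def IsPathFrom (E : Finset (V × V)) (S : Finset V) (i : V) (γ : List V) : Prop :=
  2 ≤ γ.length ∧ (∃ s ∈ S, γ.head? = some s) ∧ γ.getLast? = some i ∧
    γ.Chain' (fun a b : V => (a, b) ∈ E)

/-- The list of edges `(i₀,i₁), …, (i_{λ-1}, i_λ)` of a path `γ = [i₀, …, i_λ]`. -/
def pathEdges (γ : List V) : List (V × V) := γ.zip γ.tail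

/-- The weight `L(γ) = 1 - ∑_{l=1}^{λ} (1 - p(i_{l-1}, i_l))` of a path. -/
noncomputable def L (p : V × V → ℝ) (γ : List V) : ℝ :=
  1 - ((pathEdges γ).map (fun e => 1 - p e)).sum

/-- `π*_i = max(0, max_{γ ∈ Γ(S,i)} L(γ))`, with value `0` when `Γ(S,i) = ∅`. -/
noncomputable def piStar (E : Finset (V × V)) (p : V × V → ℝ) (S : Finset V) (i : V) : ℝ :=
  sSup (insert 0 {x : ℝ | ∃ γ : List V, IsPathFrom E S i γ ∧ x = L p γ})

/-- The independent cascade distribution `θ_ic` : each edge of `E` is live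
independently with probability `p e`. -/
noncomputable def thetaIC (E : Finset (V × V)) (p : V × V → ℝ) (c : Finset (V × V)) : ℝ :=
  if c ⊆ E then (∏ e ∈ c, p e) * ∏ e ∈ E \ c, (1 - p e) else 0

/-- The independent cascade influence function `f^ic`. -/
noncomputable def fic (E : Finset (V × V)) (p : V × V → ℝ) (S : Finset V) : ℝ :=
  expInf (thetaIC E p) S


/-- Feasibility for the linear program of Theorem 2:
`π : V → [0,1]`, `π i = 1` for `i ∈ S`, and `π i - π j ≤ 1 - p (i,j)` for `(i,j) ∈ E`. -/
def LPfeasible (E : Finset (V × V)) (p : V × V → ℝ) (S : Finset V) (x : V → ℝ) : Prop :=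
  (∀ i, 0 ≤ x i ∧ x i ≤ 1) ∧ (∀ i ∈ S, x i = 1) ∧ ∀ e ∈ E, x e.1 - x e.2 ≤ 1 - p e

lemma pathEdges_cons_cons (a b : V) (t : List V) :
    pathEdges (a :: b :: t) = (a, b) :: pathEdges (b :: t) := rfl

lemma mem_pathEdges {r : V → V → Prop} :
    ∀ γ : List V, γ.Chain' r → ∀ e ∈ pathEdges γ, r e.1 e.2 := by
  intro γ
  induction γ with
  | nil => intro _ e he; simp [pathEdges] at he
  | cons a t ih =>
    cases t with
    | nil => intro _ e he; simp [pathEdges] at he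
    | cons b t' =>
      intro h e he
      simp only [List.Chain', List.isChain_cons_cons] at h
      rw [pathEdges_cons_cons] at he
      rcases List.mem_cons.1 he with h1 | h2
      · subst h1; exact h.1
      · exact ih h.2 e h2

lemma chain_bound (E : Finset (V × V)) (p : V × V → ℝ) (x : V → ℝ)
    (hx : ∀ e ∈ E, x e.1 - x e.2 ≤ 1 - p e) :
    ∀ γ : List V, γ.Chain' (fun a b : V => (a, b) ∈ E) → ∀ a b : V,
      γ.head? = some a → γ.getLast? = some b →
      x a - ((pathEdges γ).map (fun e => 1 - p e)).sum ≤ x b := by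
  intro γ
  induction γ with
  | nil => intro _ a b ha; simp at ha
  | cons c t ih =>
    cases t with
    | nil =>
      intro _ a b ha hb
      simp [pathEdges] at ha hb ⊢
      subst ha; rw [hb]
    | cons d t' =>
      intro h a b ha hb
      simp only [List.Chain', List.isChain_cons_cons] at h
      have ha' : a = c := by simpa using ha.symm
      subst ha'
      rw [List.getLast?_cons_cons] at hb
      have h1 : x a - (1 - p (a, d)) ≤ x d := by
        have := hx (a, d) h.1; simp at this; linarith
      have h2 := ih h.2 d b rfl hb
      rw [pathEdges_cons_cons]
      simp only [List.map_cons, List.sum_cons]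
      linarith

lemma L_le_one (E : Finset (V × V)) (p : V × V → ℝ) (hp : ∀ e ∈ E, 0 ≤ p e ∧ p e ≤ 1)
    (γ : List V) (h : γ.Chain' (fun a b : V => (a, b) ∈ E)) : L p γ ≤ 1 := by
  unfold L
  have : 0 ≤ ((pathEdges γ).map (fun e => 1 - p e)).sum := by
    apply List.sum_nonneg
    intro y hy
    rcases List.mem_map.1 hy with ⟨e, he, rfl⟩
    have := (hp e (mem_pathEdges γ h e he)).2
    linarith
  linarith

lemma piStar_bddAbove (E : Finset (V × V)) (p : V × V → ℝ)
    (hp : ∀ e ∈ E, 0 ≤ p e ∧ p e ≤ 1) (S : Finset V) (i : V) :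
    BddAbove (insert 0 {x : ℝ | ∃ γ : List V, IsPathFrom E S i γ ∧ x = L p γ}) := by
  refine ⟨1, ?_⟩
  rintro y (rfl | ⟨γ, hγ, rfl⟩)
  · norm_num
  · exact L_le_one E p hp γ hγ.2.2.2

lemma piStar_nonneg (E : Finset (V × V)) (p : V × V → ℝ)
    (hp : ∀ e ∈ E, 0 ≤ p e ∧ p e ≤ 1) (S : Finset V) (i : V) : 0 ≤ piStar E p S i :=
  le_csSup (piStar_bddAbove E p hp S i) (Set.mem_insert 0 _)

lemma piStar_le (E : Finset (V × V)) (p : V × V → ℝ) (S : Finset V) (i : V) (c : ℝ)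
    (h0 : 0 ≤ c) (hL : ∀ γ : List V, IsPathFrom E S i γ → L p γ ≤ c) :
    piStar E p S i ≤ c := by
  apply csSup_le (Set.insert_nonempty _ _)
  rintro y (rfl | ⟨γ, hγ, rfl⟩)
  · exact h0
  · exact hL γ hγ

lemma le_piStar (E : Finset (V × V)) (p : V × V → ℝ)
    (hp : ∀ e ∈ E, 0 ≤ p e ∧ p e ≤ 1) (S : Finset V) (i : V) (γ : List V)
    (h : IsPathFrom E S i γ) : L p γ ≤ piStar E p S i :=
  le_csSup (piStar_bddAbove E p hp S i) (Set.mem_insert_of_mem _ ⟨γ, h, rfl⟩)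

lemma piStar_le_one (E : Finset (V × V)) (p : V × V → ℝ)
    (hp : ∀ e ∈ E, 0 ≤ p e ∧ p e ≤ 1) (S : Finset V) (i : V) : piStar E p S i ≤ 1 :=
  piStar_le E p S i 1 zero_le_one fun γ hγ => L_le_one E p hp γ hγ.2.2.2

lemma pathEdges_append_singleton :
    ∀ (γ : List V) (i j : V), γ.getLast? = some i →
      pathEdges (γ ++ [j]) = pathEdges γ ++ [(i, j)] := by
  intro γ
  induction γ with
  | nil => intro i j h; simp at h
  | cons a t ih =>
    cases t with
    | nil =>
      intro i j h
      simp at h; subst h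
      rfl
    | cons b t' =>
      intro i j h
      rw [List.getLast?_cons_cons] at h
      have := ih i j h
      simp only [List.cons_append, pathEdges_cons_cons] at this ⊢
      rw [this]

lemma isPathFrom_append (E : Finset (V × V)) (S : Finset V) (i j : V) (γ : List V)
    (h : IsPathFrom E S i γ) (hij : (i, j) ∈ E) : IsPathFrom E S j (γ ++ [j]) := by
  obtain ⟨hlen, ⟨s, hs, hhead⟩, hlast, hchain⟩ := h
  refine ⟨by simp; omega, ⟨s, hs, ?_⟩, by simp [List.getLast?_concat], ?_⟩
  · cases γ with
    | nil => simp at hhead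
    | cons a t => simpa using hhead
  · simp only [List.Chain', List.isChain_append]
    refine ⟨hchain, List.isChain_singleton j, ?_⟩
    intro a ha b hb
    simp at hb
    rw [hlast] at ha
    simp at ha
    subst ha; subst hb
    exact hij

lemma L_append (p : V × V → ℝ) (γ : List V) (i j : V) (h : γ.getLast? = some i) :
    L p (γ ++ [j]) = L p γ - (1 - p (i, j)) := by
  unfold L
  rw [pathEdges_append_singleton γ i j h]
  simp
  ring

lemma feasible_ge_L (E : Finset (V × V)) (p : V × V → ℝ) (S : Finset V) (x : V → ℝ)
    (hx : LPfeasible E p S x) (i : V) (γ : List V) (h : IsPathFrom E S i γ) :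
    L p γ ≤ x i := by
  obtain ⟨hlen, ⟨s, hs, hhead⟩, hlast, hchain⟩ := h
  have := chain_bound E p x hx.2.2 γ hchain s i hhead hlast
  rw [hx.2.1 s hs] at this
  exact this

/-- the LP has a unique optimal solution on `V \ S`, given by `π*`:
the extension of `π*` by `1` on `S` is feasible, every feasible `π` satisfies
`π_i ≥ π*_i` on `V \ S`, and any feasible `π` attaining the optimal objective value
agrees with `π*` on `V \ S`. -/
theorem LP_unique_optimal_solution (E : Finset (V × V)) (p : V × V → ℝ)
    (hp : ∀ e ∈ E, 0 ≤ p e ∧ p e ≤ 1) (S : Finset V) :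
    LPfeasible E p S (fun i => if i ∈ S then 1 else piStar E p S i) ∧
      (∀ x : V → ℝ, LPfeasible E p S x → ∀ i ∈ Finset.univ \ S, piStar E p S i ≤ x i) ∧
      (∀ x : V → ℝ, LPfeasible E p S x →
        (∑ i ∈ Finset.univ \ S, x i) = (∑ i ∈ Finset.univ \ S, piStar E p S i) →
        ∀ i ∈ Finset.univ \ S, x i = piStar E p S i) := by
  have part2 : ∀ x : V → ℝ, LPfeasible E p S x → ∀ i ∈ Finset.univ \ S, piStar E p S i ≤ x i := by
    intro x hx i _
    exact piStar_le E p S i (x i) (hx.1 i).1 fun γ hγ => feasible_ge_L E p S x hx i γ hγ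
  refine ⟨⟨?_, ?_, ?_⟩, part2, ?_⟩
  · intro i
    by_cases h : i ∈ S <;> simp [h]
    exact ⟨piStar_nonneg E p hp S i, piStar_le_one E p hp S i⟩
  · intro i hi; simp [hi]
  · rintro ⟨i, j⟩ he
    have hpe := hp (i, j) he
    simp only
    by_cases hj : j ∈ S
    · simp only [hj, if_pos]
      by_cases hi : i ∈ S <;> simp [hi]
      · linarith
      · have := piStar_le_one E p hp S i; linarith
    · simp only [hj, if_neg, if_false]
      by_cases hi : i ∈ S
      · simp only [hi, if_pos]
        have hpath : IsPathFrom E S j [i, j] :=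
          ⟨by simp, ⟨i, hi, rfl⟩, by simp, by simp [List.Chain', he]⟩
        have hL : L p [i, j] = p (i, j) := by simp [L, pathEdges]
        have := le_piStar E p hp S j [i, j] hpath
        rw [hL] at this
        linarith
      · simp only [hi, if_neg, if_false]
        have h0 : (0:ℝ) ≤ piStar E p S j + (1 - p (i, j)) := by
          have := piStar_nonneg E p hp S j; linarith
        have : piStar E p S i ≤ piStar E p S j + (1 - p (i, j)) := by
          apply piStar_le E p S i _ h0
          intro γ hγ
          have hpath := isPathFrom_append E S i j γ hγ he
          have hLap := L_append p γ i j hγ.2.2.1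
          have := le_piStar E p hp S j _ hpath
          rw [hLap] at this
          linarith
        linarith
  · intro x hx hsum i hi
    have hle := part2 x hx
    have := (Finset.sum_eq_sum_iff_of_le hle).1 hsum.symm i hi
    exact this.symm

end CorrIM
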